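/- The change of variables (x_1, ..., x_h) ↦ (W_1, ..., W_{h-1}, S), where W_i = (∑_{j≤i} x_j)/(∑_{j≤i+1} x_j) and S = ∑_{j=1}^h x_j, mapping (0,∞)^h to (0,1)^{h-1} × (0,∞), is a bijection whose inverse has Jacobian determinant (in absolute value) equal to S^{h-1} · ∏_{i=1}^{h-1} W_i^{i-1}. -/

import Mathlib

/-- Extend a vector `w : Fin h → ℝ` to `ℕ`, by zero outside the range. -/
def ext (h : ℕ) (w : Fin h → ℝ) (k : ℕ) : ℝ := if hk : k < h then w ⟨k, hk⟩ else 0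

/-- The change of variables `(x_1, ..., x_h) ↦ (W_1, ..., W_{h-1}, S)`, where
`W_i = (∑_{j≤i} x_j)/(∑_{j≤i+1} x_j)` (stored in coordinates `0, ..., h-2`) and
`S = ∑_{j=1}^h x_j` (stored in coordinate `h-1`). -/
noncomputable def fwdMap (h : ℕ) (x : Fin h → ℝ) : Fin h → ℝ := fun i =>
  if (i : ℕ) < h - 1 then
    (∑ j ∈ Finset.range ((i : ℕ) + 1), ext h x j)
      / (∑ j ∈ Finset.range ((i : ℕ) + 2), ext h x j)
  else ∑ j ∈ Finset.range h, ext h x j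

/-- The inverse of the change of variables: the input `w` has coordinates
`W_1, ..., W_{h-1}, S`, and the output is `x_i = (1 - W_{i-1}) (∏_{k=i}^{h-1} W_k) S`
(with `W_0 = 0`), for `i = 1, ..., h`. -/
noncomputable def invMap (h : ℕ) (w : Fin h → ℝ) : Fin h → ℝ := fun i =>
  (1 - if (i : ℕ) = 0 then 0 else ext h w ((i : ℕ) - 1))
    * (∏ m ∈ Finset.Icc ((i : ℕ) + 1) (h - 1), ext h w (m - 1)) * ext h w (h - 1)

open Finset

namespace Stmt8Aux

variable {h : ℕ}

lemma ext_eq (w : Fin h → ℝ) {k : ℕ} (hk : k < h) : ext h w k = w ⟨k, hk⟩ := dif_pos hk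

noncomputable def yv (h : ℕ) (w : Fin h → ℝ) (i : ℕ) : ℝ := ∏ m ∈ Finset.Ico i h, ext h w m

lemma invMap_eq (hh : 2 ≤ h) (w : Fin h → ℝ) (i : Fin h) :
    invMap h w i = (1 - if (i : ℕ) = 0 then 0 else ext h w ((i : ℕ) - 1)) * yv h w (i : ℕ) := by
  have hi : (i : ℕ) ≤ h - 1 := Nat.le_sub_one_of_lt i.isLt
  have h1 : h - 1 + 1 = h := by omega
  have key : (∏ m ∈ Finset.Icc ((i : ℕ) + 1) (h - 1), ext h w (m - 1)) * ext h w (h - 1)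
      = yv h w (i : ℕ) := by
    have e0 : Finset.Icc ((i : ℕ) + 1) (h - 1) = Finset.Ico ((i : ℕ) + 1) h := by
      rw [← Finset.Ico_add_one_right_eq_Icc]; congr 1
    have e1 : Finset.Ico ((i : ℕ) + 1) h =
        Finset.map (addRightEmbedding 1) (Finset.Ico (i : ℕ) (h - 1)) := by
      rw [Finset.map_add_right_Ico, h1]
    have e2 := Finset.prod_Ico_succ_top hi (ext h w)
    rw [h1] at e2
    rw [e0, e1, Finset.prod_map]
    simp only [addRightEmbedding_apply, Nat.add_sub_cancel]
    rw [yv, e2]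
  rw [invMap, ← key, mul_assoc]

lemma yv_succ (w : Fin h → ℝ) {i : ℕ} (hi : i < h) :
    yv h w i = ext h w i * yv h w (i + 1) := by
  rw [yv, yv, Finset.prod_eq_prod_Ico_succ_bot hi]

lemma yv_pos {w : Fin h → ℝ} (hw : ∀ i, 0 < w i) (i : ℕ) : 0 < yv h w i := by
  refine Finset.prod_pos fun m hm => ?_
  rw [ext_eq w (mem_Ico.mp hm).2]; exact hw _

lemma prod_ratio (f : ℕ → ℝ) (hf : ∀ k, f k ≠ 0) :
    ∀ b a, a ≤ b → ∏ m ∈ Finset.Ico a b, (f m / f (m + 1)) = f a / f b := by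
  intro b
  induction b with
  | zero => intro a ha; simp_all [Nat.le_zero.mp ha, div_self (hf 0)]
  | succ b ih =>
    intro a ha
    rcases Nat.lt_or_ge a (b + 1) with hab | hab
    · have hab' : a ≤ b := Nat.lt_succ_iff.mp hab
      rw [Finset.prod_Ico_succ_top hab', ih a hab', div_mul_div_cancel₀]
      exact hf b
    · have : a = b + 1 := le_antisymm ha hab
      subst this
      simp [div_self (hf (b+1))]

/-- `invMap` written as a telescoping difference. -/
lemma invMap_sub (hh : 2 ≤ h) (w : Fin h → ℝ) (i : Fin h) :
    invMap h w i = yv h w (i : ℕ) - (if (i : ℕ) = 0 then 0 else yv h w ((i : ℕ) - 1)) := by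
  rw [invMap_eq hh w i]
  by_cases h0 : (i : ℕ) = 0
  · simp [h0]
  · rw [if_neg h0, if_neg h0, sub_mul, one_mul]
    congr 1
    have h1 : (i : ℕ) - 1 < h := lt_of_le_of_lt (Nat.sub_le _ _) i.isLt
    have h2 : (i : ℕ) - 1 + 1 = (i : ℕ) := Nat.succ_pred_eq_of_pos (Nat.pos_of_ne_zero h0)
    rw [yv_succ w h1, h2]

/-- Partial sums of `invMap h w`. -/
lemma sum_invMap (hh : 2 ≤ h) (w : Fin h → ℝ) :
    ∀ k, 1 ≤ k → k ≤ h → ∑ j ∈ Finset.range k, ext h (invMap h w) j = yv h w (k - 1) := by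
  intro k
  induction k with
  | zero => omega
  | succ k ih =>
    intro _ hk
    rcases Nat.eq_or_lt_of_le (show 1 ≤ k + 1 by omega) with hk1 | hk1
    · have : k = 0 := by omega
      subst this
      have h0 : (0 : ℕ) < h := by omega
      rw [Finset.sum_range_one, ext_eq _ h0, invMap_sub hh w ⟨0, h0⟩]
      simp
    · have hk' : 1 ≤ k := by omega
      have hkh : k < h := by omega
      rw [Finset.sum_range_succ, ih hk' (le_of_lt hkh), ext_eq _ hkh,
        invMap_sub hh w ⟨k, hkh⟩]
      have : ¬((⟨k, hkh⟩ : Fin h) : ℕ) = 0 := by simp; omega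
      rw [if_neg this]
      simp only []
      ring_nf
      simp
section Fwd

variable {x : Fin h → ℝ} (hx : ∀ i, 0 < x i)

include hx in
lemma ext_nonneg : ∀ k, 0 ≤ ext h x k := by
  intro k; unfold _root_.ext; split
  · exact (hx _).le
  · exact le_rfl

include hx in
lemma P_pos (hh : 2 ≤ h) : ∀ k, 1 ≤ k → 0 < ∑ j ∈ Finset.range k, ext h x j := by
  intro k hk
  induction k with
  | zero => omega
  | succ k ih =>
    rcases Nat.eq_zero_or_pos k with rfl | hk'
    · rw [Finset.sum_range_one, ext_eq x (by omega : (0:ℕ) < h)]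
      exact hx _
    · rw [Finset.sum_range_succ]
      exact add_pos_of_pos_of_nonneg (ih hk') (ext_nonneg hx k)

include hx in
lemma P_lt (hh : 2 ≤ h) {k : ℕ} (hk : k < h) :
    ∑ j ∈ Finset.range k, ext h x j < ∑ j ∈ Finset.range (k+1), ext h x j := by
  rw [Finset.sum_range_succ]
  have : 0 < ext h x k := by rw [ext_eq x hk]; exact hx _
  linarith

lemma fwd_coord_lt (hh : 2 ≤ h) {m : ℕ} (hm : m < h - 1) :
    ext h (fwdMap h x) m =
      (∑ j ∈ Finset.range (m + 1), ext h x j) / ∑ j ∈ Finset.range (m + 2), ext h x j := by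
  have hmh : m < h := by omega
  rw [ext_eq _ hmh, fwdMap]
  simp only [if_pos hm]

lemma fwd_coord_top (hh : 2 ≤ h) :
    ext h (fwdMap h x) (h - 1) = ∑ j ∈ Finset.range h, ext h x j := by
  have hmh : h - 1 < h := by omega
  rw [ext_eq _ hmh, fwdMap]
  simp only []
  rw [if_neg (by omega)]

include hx in
lemma yv_fwd (hh : 2 ≤ h) {i : ℕ} (hi : i ≤ h - 1) :
    yv h (fwdMap h x) i = ∑ j ∈ Finset.range (i + 1), ext h x j := by
  have h1 : h - 1 + 1 = h := by omega
  have e2 := Finset.prod_Ico_succ_top hi (ext h (fwdMap h x))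
  rw [h1] at e2
  rw [yv, e2, fwd_coord_top hh]
  have e3 : ∀ m ∈ Finset.Ico i (h-1), ext h (fwdMap h x) m =
      (fun k => ∑ j ∈ Finset.range (k + 1), ext h x j) m /
      (fun k => ∑ j ∈ Finset.range (k + 1), ext h x j) (m+1) := by
    intro m hm
    have := (Finset.mem_Ico.mp hm).2
    rw [fwd_coord_lt hh this]
  rw [Finset.prod_congr rfl e3, prod_ratio _ (fun k => (P_pos hx hh (k+1) (by omega)).ne') _ _ hi]
  rw [h1]
  exact div_mul_cancel₀ _ (P_pos hx hh h (by omega)).ne'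

end Fwd

/-- The target-set condition. -/
def Tgt (h : ℕ) (w : Fin h → ℝ) : Prop :=
  ∀ i : Fin h, ((i : ℕ) < h - 1 → w i ∈ Set.Ioo (0:ℝ) 1) ∧ ((i : ℕ) = h - 1 → 0 < w i)

lemma tpos (hh : 2 ≤ h) {w : Fin h → ℝ} (hw : Tgt h w) : ∀ i, 0 < w i := by
  intro i
  rcases Nat.lt_or_ge (i : ℕ) (h - 1) with hi | hi
  · exact ((hw i).1 hi).1
  · exact (hw i).2 (by have := i.isLt; omega)

lemma tlt {w : Fin h → ℝ} (hw : Tgt h w) {i : Fin h} (hi : (i : ℕ) < h - 1) : w i < 1 :=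
  ((hw i).1 hi).2

lemma mapsTo_fwd (hh : 2 ≤ h) {x : Fin h → ℝ} (hx : ∀ i, 0 < x i) : Tgt h (fwdMap h x) := by
  intro i
  constructor
  · intro hi
    have hfe : fwdMap h x i = ext h (fwdMap h x) (i : ℕ) := (ext_eq _ i.isLt).symm
    rw [hfe, fwd_coord_lt hh hi]
    have h1 : 0 < ∑ j ∈ Finset.range ((i:ℕ) + 1), ext h x j := P_pos hx hh _ (by omega)
    have h2 : (∑ j ∈ Finset.range ((i:ℕ) + 1), ext h x j)
        < ∑ j ∈ Finset.range ((i:ℕ) + 2), ext h x j := P_lt hx hh (by omega)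
    exact ⟨div_pos h1 (by linarith), (div_lt_one (by linarith)).mpr h2⟩
  · intro hi
    have hie : i = ⟨h - 1, by omega⟩ := Fin.ext hi
    rw [hie, ← ext_eq (fwdMap h x) (by omega : h - 1 < h), fwd_coord_top hh]
    exact P_pos hx hh h (by omega)

lemma leftInv (hh : 2 ≤ h) {x : Fin h → ℝ} (hx : ∀ i, 0 < x i) :
    invMap h (fwdMap h x) = x := by
  funext i
  have hi1 : (i : ℕ) ≤ h - 1 := Nat.le_sub_one_of_lt i.isLt
  rw [invMap_eq hh _ i, yv_fwd hx hh hi1]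
  have hc : (if (i : ℕ) = 0 then (0:ℝ) else ext h (fwdMap h x) ((i : ℕ) - 1))
      = (∑ j ∈ Finset.range (i : ℕ), ext h x j) / ∑ j ∈ Finset.range ((i:ℕ) + 1), ext h x j := by
    by_cases h0 : (i : ℕ) = 0
    · simp [h0]
    · rw [if_neg h0, fwd_coord_lt hh (by omega : (i:ℕ) - 1 < h - 1)]
      have e1 : (i : ℕ) - 1 + 1 = (i : ℕ) := by omega
      have e2 : (i : ℕ) - 1 + 2 = (i : ℕ) + 1 := by omega
      rw [e1, e2]
  rw [hc]
  have hP : (0:ℝ) < ∑ j ∈ Finset.range ((i:ℕ) + 1), ext h x j := P_pos hx hh _ (by omega)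
  have hs : ∑ j ∈ Finset.range ((i:ℕ) + 1), ext h x j
      = (∑ j ∈ Finset.range (i : ℕ), ext h x j) + ext h x (i : ℕ) := Finset.sum_range_succ _ _
  rw [ext_eq x i.isLt] at hs
  field_simp
  linarith [hs]

lemma mapsTo_inv (hh : 2 ≤ h) {w : Fin h → ℝ} (hw : Tgt h w) : ∀ i, 0 < invMap h w i := by
  intro i
  rw [invMap_eq hh w i]
  have hyv : 0 < yv h w (i : ℕ) := yv_pos (tpos hh hw) _
  have hc : (if (i : ℕ) = 0 then (0:ℝ) else ext h w ((i : ℕ) - 1)) < 1 := by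
    by_cases h0 : (i : ℕ) = 0
    · simp [h0]
    · rw [if_neg h0, ext_eq w (by omega : (i:ℕ) - 1 < h)]
      exact tlt hw (by simp; omega)
  have := mul_pos (by linarith : (0:ℝ) < 1 - _) hyv
  exact this

lemma rightInv (hh : 2 ≤ h) {w : Fin h → ℝ} (hw : Tgt h w) :
    fwdMap h (invMap h w) = w := by
  have hwp := tpos hh hw
  funext i
  rw [fwdMap]
  by_cases hi : (i : ℕ) < h - 1
  · rw [if_pos hi]
    rw [sum_invMap hh w ((i:ℕ)+1) (by omega) (by omega),
      sum_invMap hh w ((i:ℕ)+2) (by omega) (by omega)]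
    have e1 : (i : ℕ) + 1 - 1 = (i : ℕ) := by omega
    have e2 : (i : ℕ) + 2 - 1 = (i : ℕ) + 1 := by omega
    rw [e1, e2, yv_succ w i.isLt, ext_eq w i.isLt]
    rw [mul_div_assoc, div_self (yv_pos hwp _).ne', mul_one]
  · rw [if_neg hi]
    have hie : (i : ℕ) = h - 1 := by have := i.isLt; omega
    rw [sum_invMap hh w h (by omega) le_rfl, yv_succ w (by omega : h - 1 < h)]
    have : yv h w (h - 1 + 1) = 1 := by
      rw [yv]
      have : h - 1 + 1 = h := by omega
      rw [this, Finset.Ico_self, Finset.prod_empty]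
    rw [this, mul_one, ext_eq w (by omega : h - 1 < h)]
    congr 1
    exact (Fin.ext hie).symm

section Deriv

open ContinuousLinearMap

/-- Indices `≥ i`. -/
def Si (h : ℕ) (i : Fin h) : Finset (Fin h) := Finset.univ.filter (fun m => (i : ℕ) ≤ (m : ℕ))

/-- The linear "difference" map `y ↦ (y i - y (i-1))_i`. -/
noncomputable def Lclm (h : ℕ) : (Fin h → ℝ) →L[ℝ] (Fin h → ℝ) :=
  ContinuousLinearMap.pi fun i : Fin h =>
    (ContinuousLinearMap.proj i : (Fin h → ℝ) →L[ℝ] ℝ) -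
      (if (i : ℕ) = 0 then (0 : (Fin h → ℝ) →L[ℝ] ℝ) else
        (ContinuousLinearMap.proj
          (⟨(i : ℕ) - 1, lt_of_le_of_lt (Nat.sub_le _ _) i.isLt⟩ : Fin h) : (Fin h → ℝ) →L[ℝ] ℝ))

/-- The "partial products" map. -/
noncomputable def gmap (h : ℕ) (w : Fin h → ℝ) : Fin h → ℝ := fun i => ∏ m ∈ Si h i, w m

lemma gmap_eq_yv (w : Fin h → ℝ) (i : Fin h) : gmap h w i = yv h w (i : ℕ) := by
  rw [gmap, Si, Finset.prod_filter]
  have e : ∀ m : Fin h, (if (i : ℕ) ≤ (m : ℕ) then w m else 1)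
      = (fun j : ℕ => if (i : ℕ) ≤ j then ext h w j else 1) (m : ℕ) := by
    intro m
    simp only [ext_eq w m.isLt, Fin.eta]
  rw [Finset.prod_congr rfl fun m _ => e m,
    Fin.prod_univ_eq_prod_range (fun j : ℕ => if (i : ℕ) ≤ j then ext h w j else 1) h,
    ← Finset.prod_filter]
  congr 1
  ext j
  simp only [Finset.mem_filter, Finset.mem_range, Finset.mem_Ico]
  omega

/-- The derivative of `gmap`. -/
noncomputable def Dclm (h : ℕ) (w : Fin h → ℝ) : (Fin h → ℝ) →L[ℝ] (Fin h → ℝ) :=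
  ContinuousLinearMap.pi fun i : Fin h =>
    ∑ m ∈ Si h i, (∏ k ∈ (Si h i).erase m, w k) •
      (ContinuousLinearMap.proj m : (Fin h → ℝ) →L[ℝ] ℝ)

lemma hasFDerivAt_gmap (w : Fin h → ℝ) : HasFDerivAt (gmap h) (Dclm h w) w := by
  show HasFDerivAt (fun w i => ∏ m ∈ Si h i, w m) _ w
  apply hasFDerivAt_pi.2
  intro i
  exact HasFDerivAt.finset_prod (fun m _ => hasFDerivAt_apply m w)

lemma invMap_comp (hh : 2 ≤ h) : invMap h = fun w => Lclm h (gmap h w) := by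
  funext w i
  rw [invMap_sub hh w i]
  rw [Lclm, ContinuousLinearMap.pi_apply, ContinuousLinearMap.sub_apply,
    ContinuousLinearMap.proj_apply, gmap_eq_yv]
  congr 1
  rw [apply_ite (fun L : (Fin h → ℝ) →L[ℝ] ℝ => L (gmap h w))]
  by_cases h0 : (i : ℕ) = 0
  · simp [h0]
  · rw [if_neg h0, if_neg h0, ContinuousLinearMap.proj_apply, gmap_eq_yv]

lemma hasFDerivAt_invMap (hh : 2 ≤ h) (w : Fin h → ℝ) :
    HasFDerivAt (invMap h) ((Lclm h).comp (Dclm h w)) w := by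
  rw [invMap_comp hh]
  exact (Lclm h).hasFDerivAt.comp w (hasFDerivAt_gmap w)

lemma det_Lclm : LinearMap.det ((Lclm h : (Fin h → ℝ) →L[ℝ] (Fin h → ℝ))
    : (Fin h → ℝ) →ₗ[ℝ] (Fin h → ℝ)) = 1 := by
  rw [← LinearMap.det_toMatrix']
  have happ : ∀ p q : Fin h, LinearMap.toMatrix' ((Lclm h : (Fin h → ℝ) →L[ℝ] (Fin h → ℝ))
      : (Fin h → ℝ) →ₗ[ℝ] (Fin h → ℝ)) p q
      = (if p = q then 1 else 0) -
        (if (p : ℕ) = 0 then (0:ℝ) else if ((p:ℕ) - 1 : ℕ) = (q : ℕ) then 1 else 0) := by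
    intro p q
    rw [LinearMap.toMatrix'_apply]
    have hs : (Pi.single q 1 : Fin h → ℝ) = fun j' => if j' = q then 1 else 0 := by
      ext j'; simp [Pi.single_apply]
    rw [hs]
    show Lclm h (fun j' => if j' = q then 1 else 0) p = _
    rw [Lclm, ContinuousLinearMap.pi_apply, ContinuousLinearMap.sub_apply,
      ContinuousLinearMap.proj_apply]
    congr 1
    rw [apply_ite (fun L : (Fin h → ℝ) →L[ℝ] ℝ => L (fun j' => if j' = q then 1 else 0))]
    by_cases h0 : (p : ℕ) = 0
    · simp [h0]
    · rw [if_neg h0, if_neg h0, ContinuousLinearMap.proj_apply]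
      simp [Fin.ext_iff]
  have htri : Matrix.BlockTriangular (LinearMap.toMatrix'
      ((Lclm h : (Fin h → ℝ) →L[ℝ] (Fin h → ℝ)) : (Fin h → ℝ) →ₗ[ℝ] (Fin h → ℝ)))
      OrderDual.toDual := by
    intro p q hpq
    have hpq' : p < q := hpq
    rw [happ p q, if_neg (Fin.ne_of_lt hpq')]
    have : ¬((p:ℕ) - 1 = (q:ℕ)) := by
      have := Fin.lt_def.mp hpq'
      omega
    by_cases h0 : (p : ℕ) = 0 <;> simp [h0, this]
  rw [Matrix.det_of_lowerTriangular _ htri]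
  apply Finset.prod_eq_one
  intro p _
  rw [happ p p, if_pos rfl]
  by_cases h0 : (p : ℕ) = 0
  · simp [h0]
  · rw [if_neg h0, if_neg (by omega)]
    ring

lemma det_Dclm (w : Fin h → ℝ) :
    LinearMap.det ((Dclm h w : (Fin h → ℝ) →L[ℝ] (Fin h → ℝ))
      : (Fin h → ℝ) →ₗ[ℝ] (Fin h → ℝ)) = ∏ k : Fin h, w k ^ (k : ℕ) := by
  rw [← LinearMap.det_toMatrix']
  have happ : ∀ p q : Fin h, LinearMap.toMatrix' ((Dclm h w : (Fin h → ℝ) →L[ℝ] (Fin h → ℝ))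
      : (Fin h → ℝ) →ₗ[ℝ] (Fin h → ℝ)) p q
      = if q ∈ Si h p then ∏ k ∈ (Si h p).erase q, w k else 0 := by
    intro p q
    rw [LinearMap.toMatrix'_apply]
    have hs : (Pi.single q 1 : Fin h → ℝ) = fun j' => if j' = q then 1 else 0 := by
      ext j'; simp [Pi.single_apply]
    rw [hs]
    show Dclm h w (fun j' => if j' = q then 1 else 0) p = _
    rw [Dclm, ContinuousLinearMap.pi_apply, ContinuousLinearMap.sum_apply]
    have e : ∀ m ∈ Si h p, ((∏ k ∈ (Si h p).erase m, w k) •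
        (ContinuousLinearMap.proj m : (Fin h → ℝ) →L[ℝ] ℝ))
        (fun j' => if j' = q then (1:ℝ) else 0)
        = if m = q then ∏ k ∈ (Si h p).erase m, w k else 0 := by
      intro m _
      rw [ContinuousLinearMap.smul_apply, ContinuousLinearMap.proj_apply]
      by_cases hmq : m = q <;> simp [hmq]
    rw [Finset.sum_congr rfl e, Finset.sum_ite_eq' (Si h p) q]
  have htri : Matrix.BlockTriangular (LinearMap.toMatrix'
      ((Dclm h w : (Fin h → ℝ) →L[ℝ] (Fin h → ℝ)) : (Fin h → ℝ) →ₗ[ℝ] (Fin h → ℝ))) id := by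
    intro p q hpq
    have hpq' : (q : ℕ) < (p : ℕ) := Fin.lt_def.mp hpq
    rw [happ p q, if_neg]
    simp only [Si, Finset.mem_filter, Finset.mem_univ, true_and]
    omega
  rw [Matrix.det_of_upperTriangular htri]
  have hdiag : ∀ p : Fin h, (Si h p).erase p = Finset.univ.filter (fun k : Fin h => (p:ℕ) < (k:ℕ)) := by
    intro p
    ext k
    simp only [Finset.mem_erase, Si, Finset.mem_filter, Finset.mem_univ, true_and, Fin.ext_iff,
      ne_eq]
    omega
  calc ∏ p : Fin h, LinearMap.toMatrix' ((Dclm h w : (Fin h → ℝ) →L[ℝ] (Fin h → ℝ))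
      : (Fin h → ℝ) →ₗ[ℝ] (Fin h → ℝ)) p p
      = ∏ p : Fin h, ∏ k ∈ Finset.univ.filter (fun k : Fin h => (p:ℕ) < (k:ℕ)), w k := by
        apply Finset.prod_congr rfl
        intro p _
        rw [happ p p, if_pos (by simp [Si]), hdiag p]
    _ = ∏ p : Fin h, ∏ k : Fin h, (if (p:ℕ) < (k:ℕ) then w k else 1) := by
        apply Finset.prod_congr rfl
        intro p _
        rw [Finset.prod_filter]
    _ = ∏ k : Fin h, ∏ p : Fin h, (if (p:ℕ) < (k:ℕ) then w k else 1) := Finset.prod_comm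
    _ = ∏ k : Fin h, w k ^ (k : ℕ) := by
        apply Finset.prod_congr rfl
        intro k _
        rw [← Finset.prod_filter, Finset.prod_const]
        congr 1
        have : Finset.univ.filter (fun p : Fin h => (p:ℕ) < (k:ℕ)) = Finset.Iio k := by
          ext p
          simp only [Finset.mem_filter, Finset.mem_univ, true_and, Finset.mem_Iio, Fin.lt_def]
        rw [this, Fin.card_Iio]

end Deriv

lemma prod_pow_reindex (hh : 2 ≤ h) (w : Fin h → ℝ) :
    ∏ k : Fin h, w k ^ (k : ℕ)
      = ext h w (h - 1) ^ (h - 1) * ∏ i ∈ Finset.Icc 1 (h - 1), ext h w (i - 1) ^ (i - 1) := by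
  have h1 : h - 1 + 1 = h := by omega
  have e0 : ∏ k : Fin h, w k ^ (k : ℕ) = ∏ j ∈ Finset.range h, ext h w j ^ j := by
    rw [← Fin.prod_univ_eq_prod_range (fun j : ℕ => ext h w j ^ j) h]
    apply Finset.prod_congr rfl
    intro k _
    rw [ext_eq w k.isLt, Fin.eta]
  have e1 := Finset.prod_range_succ (fun j : ℕ => ext h w j ^ j) (h - 1)
  rw [h1] at e1
  rw [e0, e1, mul_comm]
  congr 1
  have e2 : Finset.Icc 1 (h - 1) = Finset.map (addRightEmbedding 1) (Finset.Ico 0 (h - 1)) := by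
    rw [Finset.map_add_right_Ico, ← Finset.Ico_add_one_right_eq_Icc]
  rw [e2, Finset.prod_map, Finset.range_eq_Ico]
  apply Finset.prod_congr rfl
  intro j _
  simp [addRightEmbedding_apply]

lemma abs_det_invMap (hh : 2 ≤ h) (w : Fin h → ℝ) (hw : Tgt h w) :
    |(fderiv ℝ (invMap h) w).det|
      = ext h w (h - 1) ^ (h - 1) * ∏ i ∈ Finset.Icc 1 (h - 1), ext h w (i - 1) ^ (i - 1) := by
  rw [(hasFDerivAt_invMap hh w).fderiv]
  have hdet : ((Lclm h).comp (Dclm h w)).det = ∏ k : Fin h, w k ^ (k : ℕ) := by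
    rw [ContinuousLinearMap.det, ContinuousLinearMap.toLinearMap_comp, LinearMap.det_comp,
      det_Lclm, det_Dclm, one_mul]
  rw [hdet, abs_of_pos, prod_pow_reindex hh w]
  exact Finset.prod_pos fun k _ => pow_pos (tpos hh hw k) _

end Stmt8Aux


/-- The change of variables `(x_1, ..., x_h) ↦ (W_1, ..., W_{h-1}, S)` maps `(0,∞)^h`
bijectively to `(0,1)^{h-1} × (0,∞)`, with inverse `invMap`, and the inverse has Jacobian
determinant (in absolute value) `S^{h-1} ∏_{i=1}^{h-1} W_i^{i-1}`. -/
theorem stmt8 (h : ℕ) (hh : 2 ≤ h) :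
    Set.BijOn (fwdMap h)
      {x : Fin h → ℝ | ∀ i, 0 < x i}
      {w : Fin h → ℝ | ∀ i : Fin h,
        ((i : ℕ) < h - 1 → w i ∈ Set.Ioo (0:ℝ) 1) ∧ ((i : ℕ) = h - 1 → 0 < w i)}
    ∧ Set.InvOn (invMap h) (fwdMap h)
        {x : Fin h → ℝ | ∀ i, 0 < x i}
        {w : Fin h → ℝ | ∀ i : Fin h,
          ((i : ℕ) < h - 1 → w i ∈ Set.Ioo (0:ℝ) 1) ∧ ((i : ℕ) = h - 1 → 0 < w i)}
    ∧ (∀ w : Fin h → ℝ,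
        (∀ i : Fin h, ((i : ℕ) < h - 1 → w i ∈ Set.Ioo (0:ℝ) 1)
          ∧ ((i : ℕ) = h - 1 → 0 < w i)) →
        |(fderiv ℝ (invMap h) w).det|
          = ext h w (h - 1) ^ (h - 1)
            * ∏ i ∈ Finset.Icc 1 (h - 1), ext h w (i - 1) ^ (i - 1)) := by
  have hinv : Set.InvOn (invMap h) (fwdMap h)
      {x : Fin h → ℝ | ∀ i, 0 < x i}
      {w : Fin h → ℝ | ∀ i : Fin h,
        ((i : ℕ) < h - 1 → w i ∈ Set.Ioo (0:ℝ) 1) ∧ ((i : ℕ) = h - 1 → 0 < w i)} :=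
    ⟨fun x hx => Stmt8Aux.leftInv hh hx, fun w hw => Stmt8Aux.rightInv hh hw⟩
  refine ⟨hinv.bijOn (fun x hx => Stmt8Aux.mapsTo_fwd hh hx)
    (fun w hw i => Stmt8Aux.mapsTo_inv hh hw i), hinv,
    fun w hw => Stmt8Aux.abs_det_invMap hh w hw⟩
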